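/- Let q be a prime power, s, m positive integers with s dividing m and m/s ≥ 3. Let t, u be positive integers with 1 ≤ t ≤ m/s - 2 and 1 ≤ u ≤ (q^(m-ts) - 1)/(q^s - 1) - 1. Then the coset leader of the q-cyclotomic coset of q^(ts) - 1 + (q^s - 1)·u·q^(ts) modulo q^m - 1 is greater than or equal to q^(ts+s) - 1. -/

import Mathlib

lemma split_mod_div (D r k : ℕ) (h : r < D) : (r + D * k) % D = r ∧ (r + D * k) / D = k := by
  constructor
  · rw [Nat.add_mul_mod_self_left, Nat.mod_eq_of_lt h]
  · rw [Nat.add_mul_div_left _ _ (Nat.lt_of_le_of_lt (Nat.zero_le r) h), Nat.div_eq_of_lt h,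
      Nat.zero_add]

lemma rot (q m j x : ℕ) (hq : 2 ≤ q) (hj : j ≤ m) (hx : x < q ^ m - 1) :
    x * q ^ j % (q ^ m - 1) = x % q ^ (m - j) * q ^ j + x / q ^ (m - j) := by
  have hd : (m - j) + j = m := by omega
  have hqd : 0 < q ^ (m - j) := pow_pos (by omega) _
  have hqj : 0 < q ^ j := pow_pos (by omega) _
  have hqm : q ^ m = q ^ (m - j) * q ^ j := by rw [← pow_add, hd]
  set A := x % q ^ (m - j) with hA'
  set B := x / q ^ (m - j) with hB'
  have hxe : A + q ^ (m - j) * B = x := Nat.mod_add_div x _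
  have hA : A < q ^ (m - j) := Nat.mod_lt _ hqd
  have hB : B < q ^ j := by
    apply Nat.div_lt_of_lt_mul
    rw [← pow_add, hd]; omega
  have hbound : A * q ^ j + B < q ^ m - 1 := by
    by_contra hcon
    push_neg at hcon
    obtain ⟨Z, hZ⟩ : ∃ Z, A * q ^ j = Z := ⟨_, rfl⟩
    have h1 : Z ≤ q ^ m - q ^ j := by
      rw [← hZ]
      calc A * q ^ j ≤ (q ^ (m - j) - 1) * q ^ j := Nat.mul_le_mul_right _ (by omega)
        _ = q ^ m - q ^ j := by rw [Nat.sub_mul, one_mul, ← hqm]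
    rw [hZ] at hcon
    have hjm : q ^ j ≤ q ^ m := Nat.pow_le_pow_right (by omega) hj
    have hBeq : B = q ^ j - 1 := by omega
    have h2 : (q ^ (m - j) - 1) * q ^ j ≤ Z := by
      rw [Nat.sub_mul, one_mul, ← hqm]; omega
    rw [← hZ] at h2
    have hAeq : q ^ (m - j) - 1 ≤ A := Nat.le_of_mul_le_mul_right h2 hqj
    have hxeq : x = q ^ m - 1 := by
      have hA2 : A = q ^ (m - j) - 1 := by omega
      obtain ⟨W, hW⟩ : ∃ W, q ^ (m - j) * B = W := ⟨_, rfl⟩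
      have : W = q ^ m - q ^ (m - j) := by
        rw [← hW, hBeq, Nat.mul_sub, mul_one, ← hqm]
      have hdm : q ^ (m - j) ≤ q ^ m := Nat.pow_le_pow_right (by omega) (by omega)
      rw [hW] at hxe
      omega
    omega
  have hxq : x * q ^ j = A * q ^ j + B + B * (q ^ m - 1) := by
    have h1m : (1 : ℕ) ≤ q ^ m := Nat.one_le_pow _ _ (by omega)
    have hqm1 : q ^ m = 1 + (q ^ m - 1) := by omega
    calc x * q ^ j = (A + q ^ (m - j) * B) * q ^ j := by rw [hxe]
      _ = A * q ^ j + B * (q ^ (m - j) * q ^ j) := by ring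
      _ = A * q ^ j + B * q ^ m := by rw [← hqm]
      _ = A * q ^ j + B * (1 + (q ^ m - 1)) := by rw [← hqm1]
      _ = A * q ^ j + B + B * (q ^ m - 1) := by ring
  rw [hxq, Nat.add_mul_mod_self_right, Nat.mod_eq_of_lt hbound]

lemma key (q s n m v j : ℕ) (hq : 2 ≤ q) (hs : 0 < s) (hsn : s ≤ n)
    (hnm : n + 2 * s ≤ m) (hdvd : s ∣ m - n) (hv0 : 0 < v)
    (hv1 : v ≤ q ^ (m - n) - q ^ s) (hvd : (q ^ s - 1) ∣ v) (hj : j < m) :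
    q ^ (n + s) - 1 ≤ (q ^ n - 1 + v * q ^ n) * q ^ j % (q ^ m - 1) := by
  have hq0 : 0 < q := by omega
  have hqn : 0 < q ^ n := pow_pos hq0 _
  have hqs1 : 1 < q ^ s := Nat.one_lt_pow (by omega) (by omega)
  -- a < q^m - 1
  have hvqn : v * q ^ n ≤ q ^ m - q ^ (n + s) := by
    calc v * q ^ n ≤ (q ^ (m - n) - q ^ s) * q ^ n := Nat.mul_le_mul_right _ hv1
      _ = q ^ m - q ^ (n + s) := by
          rw [Nat.sub_mul, ← pow_add, ← pow_add]
          congr 2 <;> omega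
  have hns_lt : q ^ n < q ^ (n + s) := Nat.pow_lt_pow_right (by omega) (by omega)
  have hns_m : q ^ (n + s) ≤ q ^ m := Nat.pow_le_pow_right (by omega) (by omega)
  have ha : q ^ n - 1 + v * q ^ n < q ^ m - 1 := by
    obtain ⟨VX, hVX⟩ : ∃ VX, v * q ^ n = VX := ⟨_, rfl⟩
    rw [hVX] at hvqn ⊢
    omega
  rw [rot q m j _ hq (Nat.le_of_lt hj) ha]
  by_cases hjmn : j ≤ m - n
  · -- d = m - j ≥ n, split v at e = m - n - j
    have hqe : 0 < q ^ (m - n - j) := pow_pos hq0 _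
    set v0 := v % q ^ (m - n - j) with hv0'
    set v1 := v / q ^ (m - n - j) with hv1'
    have hvsplit : v0 + q ^ (m - n - j) * v1 = v := Nat.mod_add_div v _
    have hv0lt' : v0 < q ^ (m - n - j) := Nat.mod_lt _ hqe
    have hv1lt : v1 < q ^ j := by
      rw [hv1']
      apply Nat.div_lt_of_lt_mul
      rw [← pow_add]
      have e3 : m - n - j + j = m - n := by omega
      rw [e3]
      have h4 : q ^ s ≤ q ^ (m - n) := Nat.pow_le_pow_right (by omega) (by omega)
      omega
    clear_value v0 v1
    have hprod : q ^ (m - n - j) * q ^ n = q ^ (m - j) := by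
      rw [← pow_add]; congr 1 <;> omega
    have hsmall : q ^ n - 1 + v0 * q ^ n < q ^ (m - j) := by
      have h1 : v0 * q ^ n ≤ (q ^ (m - n - j) - 1) * q ^ n := Nat.mul_le_mul_right _ (by omega)
      have h2 : (q ^ (m - n - j) - 1) * q ^ n = q ^ (m - j) - q ^ n := by
        rw [Nat.sub_mul, one_mul, hprod]
      have h3 : q ^ n ≤ q ^ (m - j) := Nat.pow_le_pow_right (by omega) (by omega)
      obtain ⟨V0X, hV0X⟩ : ∃ x, v0 * q ^ n = x := ⟨_, rfl⟩
      rw [hV0X] at h1 ⊢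
      rw [h2] at h1
      omega
    have harep : q ^ n - 1 + v * q ^ n = (q ^ n - 1 + v0 * q ^ n) + q ^ (m - j) * v1 := by
      have : v * q ^ n = v0 * q ^ n + q ^ (m - j) * v1 := by
        rw [← hvsplit, ← hprod]; ring
      rw [this, ← add_assoc]
    rw [harep, (split_mod_div _ _ _ hsmall).1, (split_mod_div _ _ _ hsmall).2]
    by_cases hjs : j ≤ s
    · by_contra hcon
      push_neg at hcon
      -- v0 < q^(s-j)
      have hv0lt : v0 < q ^ (s - j) := by
        have h1 : v0 * q ^ n * q ^ j ≤ (q ^ n - 1 + v0 * q ^ n) * q ^ j :=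
          Nat.mul_le_mul_right _ (by omega)
        have h2 : v0 * q ^ n * q ^ j < q ^ (n + s) := by
          calc v0 * q ^ n * q ^ j ≤ (q ^ n - 1 + v0 * q ^ n) * q ^ j := h1
            _ ≤ (q ^ n - 1 + v0 * q ^ n) * q ^ j + v1 := Nat.le_add_right _ _
            _ < q ^ (n + s) - 1 := hcon
            _ ≤ q ^ (n + s) := Nat.sub_le _ _
        have h3 : v0 * q ^ (n + j) < q ^ (s - j) * q ^ (n + j) := by
          have e1 : v0 * q ^ (n + j) = v0 * q ^ n * q ^ j := by rw [mul_assoc, ← pow_add]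
          have e2 : q ^ (s - j) * q ^ (n + j) = q ^ (n + s) := by rw [← pow_add]; congr 1 <;> omega
          rw [e1, e2]
          exact h2
        exact Nat.lt_of_mul_lt_mul_right h3
      -- divisibility of w = v0 + q^(s-j) * v1
      have hconv : s * ((m - n) / s - 1) = m - n - s := by
        have h5 : s * ((m - n) / s) = m - n := Nat.mul_div_cancel' hdvd
        have h6 : 2 ≤ (m - n) / s := by
          by_contra h7
          push_neg at h7
          interval_cases h : (m - n) / s <;> omega
        rw [Nat.mul_sub, h5, mul_one]
      have hdm : (q ^ s - 1) ∣ q ^ (m - n - s) - 1 := by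
        have := Nat.sub_dvd_pow_sub_pow (q ^ s) 1 ((m - n) / s - 1)
        rwa [one_pow, ← pow_mul, hconv] at this
      have hexp : q ^ (m - n - j) = q ^ (s - j) * q ^ (m - n - s) := by
        rw [← pow_add]; congr 1 <;> omega
      have h3 : q ^ (m - n - j) * v1 - q ^ (s - j) * v1
          = q ^ (s - j) * (q ^ (m - n - s) - 1) * v1 := by
        rw [Nat.mul_sub, mul_one, Nat.sub_mul, hexp, mul_assoc]
      have h4 : (q ^ s - 1) ∣ (q ^ (m - n - j) * v1 - q ^ (s - j) * v1) := by
        rw [h3]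
        exact ((hdm.mul_left _).mul_right _)
      have hmono : q ^ (s - j) * v1 ≤ q ^ (m - n - j) * v1 :=
        Nat.mul_le_mul_right _ (Nat.pow_le_pow_right (by omega) (by omega))
      have h5 : v0 + q ^ (s - j) * v1 = v - (q ^ (m - n - j) * v1 - q ^ (s - j) * v1) := by
        omega
      have hwdvd : (q ^ s - 1) ∣ (v0 + q ^ (s - j) * v1) := by
        rw [h5]
        exact Nat.dvd_sub hvd h4
      -- w ≤ q^s - 1
      have hsj : q ^ (s - j) * q ^ j = q ^ s := by rw [← pow_add]; congr 1 <;> omega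
      have hid : q ^ (s - j) * (q ^ j - 1) = q ^ s - q ^ (s - j) := by
        rw [Nat.mul_sub, mul_one, hsj]
      have hwle : v0 + q ^ (s - j) * v1 ≤ q ^ s - 1 := by
        have h6 : q ^ (s - j) * v1 ≤ q ^ (s - j) * (q ^ j - 1) :=
          Nat.mul_le_mul_left _ (by omega)
        rw [hid] at h6
        have h7 : q ^ (s - j) ≤ q ^ s := Nat.pow_le_pow_right (by omega) (by omega)
        omega
      -- w = 0 or w = q^s - 1
      obtain ⟨k, hk⟩ := hwdvd
      rcases Nat.eq_zero_or_pos k with hk0 | hkpos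
      · rw [hk0, mul_zero] at hk
        have hv00 : v0 = 0 ∧ q ^ (s - j) * v1 = 0 := by omega
        have hv10 : v1 = 0 := by
          rcases Nat.mul_eq_zero.mp hv00.2 with h | h
          · have := pow_pos hq0 (s - j)
            omega
          · exact h
        rw [hv00.1, hv10, mul_zero, add_zero] at hvsplit
        omega
      · have hweq : v0 + q ^ (s - j) * v1 = q ^ s - 1 := by
          have : q ^ s - 1 ≤ (q ^ s - 1) * k := Nat.le_mul_of_pos_right _ hkpos
          omega
        have hrep2 : q ^ s - 1 = (q ^ (s - j) - 1) + q ^ (s - j) * (q ^ j - 1) := by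
          have h7 : q ^ (s - j) ≤ q ^ s := Nat.pow_le_pow_right (by omega) (by omega)
          have h8 : 0 < q ^ (s - j) := pow_pos hq0 _
          omega
        have h9 := split_mod_div (q ^ (s - j)) v0 v1 hv0lt
        have h10 := split_mod_div (q ^ (s - j)) (q ^ (s - j) - 1) (q ^ j - 1)
          (by have := pow_pos hq0 (s - j); omega)
        have hv0e : v0 = q ^ (s - j) - 1 := by
          rw [← h9.1, hweq, hrep2, h10.1]
        have hv1e : v1 = q ^ j - 1 := by
          rw [← h9.2, hweq, hrep2, h10.2]
        -- compute b = q^(n+s) - 1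
        have hid1 : (q ^ (s - j) - 1) * q ^ n = q ^ (n + s - j) - q ^ n := by
          rw [Nat.sub_mul, one_mul, ← pow_add]; congr 2 <;> omega
        have hinner : q ^ n - 1 + v0 * q ^ n = q ^ (n + s - j) - 1 := by
          rw [hv0e, hid1]
          have : q ^ n ≤ q ^ (n + s - j) := Nat.pow_le_pow_right (by omega) (by omega)
          omega
        have hid2 : (q ^ (n + s - j) - 1) * q ^ j = q ^ (n + s) - q ^ j := by
          rw [Nat.sub_mul, one_mul, ← pow_add]; congr 2 <;> omega
        rw [hinner, hid2, hv1e] at hcon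
        have : q ^ j ≤ q ^ (n + s) := Nat.pow_le_pow_right (by omega) (by omega)
        have : 0 < q ^ j := pow_pos hq0 _
        omega
    · -- s < j ≤ m - n : b ≥ (q^n - 1) * q^j ≥ q^(n+s) - 1
      push_neg at hjs
      have h1 : (q ^ n - 1) * q ^ (s + 1) ≤ (q ^ n - 1 + v0 * q ^ n) * q ^ j := by
        calc (q ^ n - 1) * q ^ (s + 1) ≤ (q ^ n - 1) * q ^ j :=
              Nat.mul_le_mul_left _ (Nat.pow_le_pow_right (by omega) (by omega))
          _ ≤ (q ^ n - 1 + v0 * q ^ n) * q ^ j := Nat.mul_le_mul_right _ (Nat.le_add_right _ _)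
      have h2 : (q ^ n - 1) * q ^ (s + 1) = q ^ (n + s + 1) - q ^ (s + 1) := by
        rw [Nat.sub_mul, one_mul, ← pow_add]; congr 2 <;> omega
      have h3 : 2 * q ^ (n + s) ≤ q ^ (n + s + 1) := by
        rw [pow_succ]
        calc 2 * q ^ (n + s) = q ^ (n + s) * 2 := by ring
          _ ≤ q ^ (n + s) * q := Nat.mul_le_mul_left _ hq
      have h4 : q ^ (s + 1) ≤ q ^ (n + s) := Nat.pow_le_pow_right (by omega) (by omega)
      have h5 : 0 < q ^ (n + s) := pow_pos hq0 _
      obtain ⟨T, hT⟩ : ∃ x, (q ^ n - 1 + v0 * q ^ n) * q ^ j = x := ⟨_, rfl⟩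
      rw [hT] at h1 ⊢
      rw [h2] at h1
      omega
  · -- m - n < j < m : the run of (q-1)s wraps; b ≥ q^m - q^j
    push_neg at hjmn
    have hdj : 0 < m - j ∧ m - j < n := by omega
    have hprod : q ^ (m - j) * q ^ (n - (m - j)) = q ^ n := by
      rw [← pow_add]; congr 1 <;> omega
    have hsmall : q ^ (m - j) - 1 < q ^ (m - j) := by
      have := pow_pos hq0 (m - j); omega
    have harep : q ^ n - 1 + v * q ^ n
        = (q ^ (m - j) - 1) + q ^ (m - j) * (q ^ (n - (m - j)) - 1 + v * q ^ (n - (m - j))) := by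
      have e1 : q ^ (m - j) * (q ^ (n - (m - j)) - 1 + v * q ^ (n - (m - j)))
          = (q ^ n - q ^ (m - j)) + v * q ^ n := by
        rw [Nat.mul_add, Nat.mul_sub, mul_one, hprod, ← mul_assoc,
          mul_comm (q ^ (m - j)) v, mul_assoc, hprod]
      rw [e1]
      have h7 : q ^ (m - j) ≤ q ^ n := Nat.pow_le_pow_right (by omega) (by omega)
      obtain ⟨VX, hVX⟩ : ∃ x, v * q ^ n = x := ⟨_, rfl⟩
      rw [hVX]
      have := pow_pos hq0 (m - j)
      omega
    rw [harep, (split_mod_div _ _ _ hsmall).1, (split_mod_div _ _ _ hsmall).2]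
    have h1 : (q ^ (m - j) - 1) * q ^ j = q ^ m - q ^ j := by
      rw [Nat.sub_mul, one_mul, ← pow_add]; congr 2 <;> omega
    have h2 : q ^ j ≤ q ^ (m - 1) := Nat.pow_le_pow_right (by omega) (by omega)
    have h3 : q ^ (n + s) ≤ q ^ (m - 1) := Nat.pow_le_pow_right (by omega) (by omega)
    have h4 : 2 * q ^ (m - 1) ≤ q ^ m := by
      have e : m = (m - 1) + 1 := by omega
      rw [e, pow_succ]
      calc 2 * q ^ (m - 1) = q ^ (m - 1) * 2 := by ring
        _ ≤ q ^ (m - 1) * q := Nat.mul_le_mul_left _ hq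
    calc q ^ (n + s) - 1 ≤ q ^ m - q ^ j := by omega
      _ = (q ^ (m - j) - 1) * q ^ j := h1.symm
      _ ≤ (q ^ (m - j) - 1) * q ^ j + _ := Nat.le_add_right _ _

/-- The q-cyclotomic coset of `a` modulo `N`. -/
def qCoset (q N a : ℕ) : Set ℕ := {b | ∃ j : ℕ, b = a * q ^ j % N}

/-- The coset leader: the smallest element of the q-cyclotomic coset of `a` modulo `N`. -/
noncomputable def cosetLeader (q N a : ℕ) : ℕ := sInf (qCoset q N a)

/-- `a` is a coset leader modulo `N` if it is the minimum of its own coset. -/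
def IsCosetLeader (q N a : ℕ) : Prop := a = cosetLeader q N a

theorem stmt_4 (q s m t u : ℕ) (hq : IsPrimePow q) (hs : 0 < s) (hsm : s ∣ m)
    (hms : 3 ≤ m / s) (ht1 : 1 ≤ t) (ht2 : t ≤ m / s - 2)
    (hu1 : 1 ≤ u) (hu2 : u ≤ (q ^ (m - t * s) - 1) / (q ^ s - 1) - 1) :
    q ^ (t * s + s) - 1 ≤
      cosetLeader q (q ^ m - 1) (q ^ (t * s) - 1 + (q ^ s - 1) * u * q ^ (t * s)) := by
  have hq2 : 2 ≤ q := hq.two_le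
  have hm : m / s * s = m := Nat.div_mul_cancel hsm
  have hns : t * s + 2 * s ≤ m := by
    have h1 : (t + 2) * s ≤ m / s * s := Nat.mul_le_mul_right _ (by omega)
    have h2 : (t + 2) * s = t * s + 2 * s := by ring
    omega
  have hsn : s ≤ t * s := by
    calc s = 1 * s := (one_mul s).symm
      _ ≤ t * s := Nat.mul_le_mul_right _ ht1
  have hdvd' : s ∣ m - t * s := Nat.dvd_sub hsm (dvd_mul_left s t)
  have hqs1 : 1 < q ^ s := Nat.one_lt_pow (by omega) (by omega)
  set v := (q ^ s - 1) * u with hv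
  have hv0 : 0 < v := Nat.mul_pos (by omega) (by omega)
  have hvd : (q ^ s - 1) ∣ v := dvd_mul_right _ _
  have hv1 : v ≤ q ^ (m - t * s) - q ^ s := by
    have hsm' : q ^ s ≤ q ^ (m - t * s) := Nat.pow_le_pow_right (by omega) (by omega)
    have hX : 0 < (q ^ (m - t * s) - 1) / (q ^ s - 1) :=
      Nat.div_pos (by omega) (by omega)
    have h2 : u + 1 ≤ (q ^ (m - t * s) - 1) / (q ^ s - 1) := by omega
    have h3 : (u + 1) * (q ^ s - 1) ≤ q ^ (m - t * s) - 1 :=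
      (Nat.le_div_iff_mul_le (by omega)).mp h2
    have h4 : (u + 1) * (q ^ s - 1) = (q ^ s - 1) * u + (q ^ s - 1) := by ring
    omega
  have hm0 : 0 < m := by omega
  apply le_csInf
  · exact ⟨_, 0, rfl⟩
  · rintro b ⟨j, rfl⟩
    have hjsplit : j = m * (j / m) + j % m := (Nat.div_add_mod j m).symm
    have hpoweq : q ^ j = (q ^ m) ^ (j / m) * q ^ (j % m) := by
      rw [← pow_mul, ← pow_add, ← hjsplit]
    have hdvd2 : (q ^ m - 1) ∣ (q ^ m) ^ (j / m) - 1 := by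
      have := Nat.sub_dvd_pow_sub_pow (q ^ m) 1 (j / m)
      rwa [one_pow] at this
    have h1 : (1 : ℕ) ≡ (q ^ m) ^ (j / m) [MOD q ^ m - 1] :=
      (Nat.modEq_iff_dvd' (Nat.one_le_pow _ _ (pow_pos (by omega) _))).mpr hdvd2
    have hmodeq : (q ^ (t * s) - 1 + v * q ^ (t * s)) * q ^ j
        ≡ (q ^ (t * s) - 1 + v * q ^ (t * s)) * q ^ (j % m) [MOD q ^ m - 1] := by
      have e : (q ^ (t * s) - 1 + v * q ^ (t * s)) * q ^ j
          = ((q ^ (t * s) - 1 + v * q ^ (t * s)) * q ^ (j % m)) * (q ^ m) ^ (j / m) := by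
        rw [hpoweq]; ring
      rw [e]
      calc ((q ^ (t * s) - 1 + v * q ^ (t * s)) * q ^ (j % m)) * (q ^ m) ^ (j / m)
          ≡ ((q ^ (t * s) - 1 + v * q ^ (t * s)) * q ^ (j % m)) * 1 [MOD q ^ m - 1] :=
            Nat.ModEq.mul_left _ h1.symm
        _ = (q ^ (t * s) - 1 + v * q ^ (t * s)) * q ^ (j % m) := by rw [mul_one]
    rw [show (q ^ (t * s) - 1 + v * q ^ (t * s)) * q ^ j % (q ^ m - 1)
        = (q ^ (t * s) - 1 + v * q ^ (t * s)) * q ^ (j % m) % (q ^ m - 1) from hmodeq]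
    exact key q s (t * s) m v (j % m) hq2 hs hsn hns hdvd' hv0 hv1 hvd (Nat.mod_lt _ hm0)
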